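/- Let T be a triangulated category with infinite coproducts and let G be a set of compact objects of T. If the only localising (i.e. full triangulated, closed under coproducts) subcategory of T containing G is T itself, then the objects of G detect isomorphisms: a morphism f : X → Y in T is an isomorphism if and only if for every G in the set and every integer n, the induced map [G, X]ₙ → [G, Y]ₙ is an isomorphism. -/

import Mathlib

open CategoryTheory CategoryTheory.Limits CategoryTheory.Pretriangulated

universe v u

variable {C : Type u} [Category.{v} C] [Preadditive C] [HasZeroObject C]
  [HasShift C ℤ] [∀ n : ℤ, (shiftFunctor C n).Additive] [Pretriangulated C]
  [HasCoproducts.{v} C]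

/-- The canonical map `⨁ᵢ [A, fᵢ] → [A, ∐ f]`. -/
noncomputable def coproductComparison (A : C) {ι : Type v} [DecidableEq ι] (f : ι → C) :
    DirectSum ι (fun i => A ⟶ f i) →+ (A ⟶ ∐ f) :=
  DirectSum.toAddMonoid (fun i =>
    AddMonoidHom.mk' (fun g => g ≫ Sigma.ι f i)
      (fun g h => Preadditive.add_comp _ _ _ _ _ _))

/-- An object `A` is compact if `[A, −]` commutes with arbitrary coproducts. -/
def IsCompactObj (A : C) : Prop :=
  ∀ {ι : Type v} [DecidableEq ι] (f : ι → C), Function.Bijective (coproductComparison A f)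

/-- A localising subcategory of `T`: a full triangulated subcategory (closed under
isomorphisms, shifts and triangles) which is closed under coproducts. -/
structure IsLocalising (S : Set C) : Prop where
  mem_of_iso : ∀ {X Y : C}, (X ≅ Y) → X ∈ S → Y ∈ S
  shift_mem : ∀ {X : C} (n : ℤ), X ∈ S → X⟦n⟧ ∈ S
  ext_mem : ∀ T : Triangle C, (T ∈ distTriang C) → T.obj₁ ∈ S → T.obj₂ ∈ S → T.obj₃ ∈ S
  coprod_mem : ∀ {ι : Type v} (f : ι → C), (∀ i, f i ∈ S) → (∐ f) ∈ S

/-- If a set of compact objects generates (the only localising subcategory containing it is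
the whole category), then its objects detect isomorphisms. -/
theorem compact_generators_detect_isomorphisms (𝒢 : Set C)
    (hcompact : ∀ G ∈ 𝒢, IsCompactObj G)
    (hgen : ∀ S : Set C, IsLocalising S → 𝒢 ⊆ S → S = Set.univ)
    {X Y : C} (f : X ⟶ Y) :
    IsIso f ↔ ∀ G ∈ 𝒢, ∀ n : ℤ,
      Function.Bijective (fun g : G⟦n⟧ ⟶ X => g ≫ f) := by
  constructor
  · intro hf G _ n
    constructor
    · intro g₁ g₂ h
      simpa using congrArg (fun g => g ≫ inv f) h
    · intro g
      exact ⟨g ≫ inv f, by simp⟩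
  · intro H
    -- complete `f` to a distinguished triangle `X ⟶ Y ⟶ Z ⟶ X⟦1⟧`
    obtain ⟨Z, a, b, hT⟩ := Pretriangulated.distinguished_cocone_triangle f
    set T : Triangle C := Triangle.mk f a b with hTdef
    -- the subcategory of objects `A` with `[A⟦n⟧, Z] = 0` for all `n`
    set S : Set C := {A : C | ∀ (n : ℤ) (g : A⟦n⟧ ⟶ Z), g = 0} with hSdef
    have hloc : IsLocalising S := by
      constructor
      · intro A B e hA n g
        have h0 : (e.hom⟦n⟧' ≫ g) = 0 := hA n _
        calc g = e.inv⟦n⟧' ≫ (e.hom⟦n⟧' ≫ g) := by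
                  rw [← Category.assoc, ← Functor.map_comp]; simp
          _ = 0 := by rw [h0, comp_zero]
      · intro A m hA n g
        have e := (shiftFunctorAdd C m n).hom.app A
        have h0 : (shiftFunctorAdd C m n).hom.app A ≫ g = 0 := hA (m + n) _
        calc g = (shiftFunctorAdd C m n).inv.app A ≫
                ((shiftFunctorAdd C m n).hom.app A ≫ g) := by simp
          _ = 0 := by rw [h0, comp_zero]
      · intro T' hT' h₁ h₂ n g
        have hT'' := Pretriangulated.Triangle.shift_distinguished T' hT' n
        set T'n := (CategoryTheory.shiftFunctor (Triangle C) n).obj T' with hT'ndef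
        have hg2 : T'n.mor₂ ≫ g = 0 := h₂ n _
        obtain ⟨h, hh⟩ := Pretriangulated.Triangle.yoneda_exact₃ T'n hT'' g hg2
        have hzero : h = 0 := by
          have h0 : (shiftFunctorAdd C n 1).hom.app T'.obj₁ ≫ h = 0 := h₁ (n + 1) _
          have key : (shiftFunctorAdd C n 1).inv.app T'.obj₁ ≫
                  ((shiftFunctorAdd C n 1).hom.app T'.obj₁ ≫ h) = h :=
            Iso.inv_hom_id_app_assoc _ _ _
          rw [h0, comp_zero] at key
          exact key.symm
        rw [hh, hzero, comp_zero]
        rfl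
      · intro ι fam hfam n g
        have hc := isColimitOfPreserves (shiftFunctor C n)
          (colimit.isColimit (Discrete.functor fam))
        refine hc.hom_ext (fun j => ?_)
        have : (shiftFunctor C n).map (Sigma.ι fam j.as) ≫ g = 0 := hfam j.as n _
        simpa using this.trans (by simp)
    have hsub : 𝒢 ⊆ S := by
      intro G hG n g
      -- first show `g ≫ b = 0`
      have hb : (g ≫ b) ≫ f⟦(1:ℤ)⟧' = 0 := by
        rw [Category.assoc]
        have := Pretriangulated.comp_distTriang_mor_zero₃₁ T hT
        rw [show b ≫ f⟦(1:ℤ)⟧' = 0 from this, comp_zero]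
      have hgb : g ≫ b = 0 := by
        set e := (shiftFunctorAdd' C (n - 1) 1 n (by ring)).hom.app G with hedef
        set ei := (shiftFunctorAdd' C (n - 1) 1 n (by ring)).inv.app G with heidef
        obtain ⟨u', hu'⟩ := (shiftFunctor C (1:ℤ)).map_surjective (ei ≫ g ≫ b)
        have hcomp : u' ≫ f = 0 := by
          apply (shiftFunctor C (1:ℤ)).map_injective
          rw [Functor.map_comp, hu', Functor.map_zero, Category.assoc, hb, comp_zero]
        have hu0 : u' = 0 := by
          have hinj := (H G hG (n - 1)).injective
          have : (fun g : G⟦n-1⟧ ⟶ X => g ≫ f) u' = (fun g : G⟦n-1⟧ ⟶ X => g ≫ f) 0 := by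
            simpa using hcomp
          exact hinj this
        have : ei ≫ g ≫ b = 0 := by rw [← hu', hu0, Functor.map_zero]
        calc g ≫ b = e ≫ ei ≫ g ≫ b := by rw [← Category.assoc, hedef, heidef]; simp
          _ = 0 := by rw [this, comp_zero]
      -- exactness gives a factorisation through `Y`
      obtain ⟨h, hh⟩ := Pretriangulated.Triangle.coyoneda_exact₃ T hT g hgb
      obtain ⟨k, hk⟩ := (H G hG n).surjective h
      have hfa : f ≫ a = 0 := Pretriangulated.comp_distTriang_mor_zero₁₂ T hT
      rw [hh, ← hk]
      show (k ≫ f) ≫ a = 0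
      rw [Category.assoc, hfa, comp_zero]
    have hZ : Z ∈ S := by rw [hgen S hloc hsub]; trivial
    have hid : 𝟙 Z = 0 := by
      have h0 : (shiftFunctorZero C ℤ).hom.app Z = 0 := hZ 0 _
      calc 𝟙 Z = (shiftFunctorZero C ℤ).inv.app Z ≫ (shiftFunctorZero C ℤ).hom.app Z := by simp
        _ = 0 := by rw [h0, comp_zero]
    have hzZ : IsZero Z := by rwa [IsZero.iff_id_eq_zero]
    exact (Pretriangulated.Triangle.isZero₃_iff_isIso₁ T hT).1 hzZ
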